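/- Let d ≥ 0 and λ_0,...,λ_d be arbitrary integers not all zero. Then for every infinite set A ⊆ ℕ, limsup_{n→∞} |Σ_{i=0}^d λ_i·R_A(n-i)| ≥ limsup_{n→∞} |Σ_{i=0}^d λ_i|/(2(d+1)^2) · (B(A,λ,n)/√n)^2. -/

import Mathlib

open Filter Finset
open scoped Classical

/-- Number of ordered pairs (a,a') with a,a' ∈ A and a+a' = n. -/
noncomputable def Rf (A : Set ℕ) (n : ℕ) : ℕ :=
  Nat.card {p : ℕ × ℕ | p.1 ∈ A ∧ p.2 ∈ A ∧ p.1 + p.2 = n}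

/-- Rf extended to ℤ by 0 on negatives. -/
noncomputable def Rz (A : Set ℕ) (k : ℤ) : ℕ :=
  if 0 ≤ k then Rf A k.toNat else 0

/-- Counting function A(n) = #{a ∈ A : a ≤ n}. -/
noncomputable def cnt (A : Set ℕ) (n : ℕ) : ℕ :=
  Nat.card {a : ℕ | a ∈ A ∧ a ≤ n}

/-- Characteristic function of A, extended by 0 to negative integers. -/
noncomputable def chi (A : Set ℕ) (k : ℤ) : ℤ :=
  if 0 ≤ k ∧ k.toNat ∈ A then 1 else 0

/-- B(A, λ, n) = #{m ≤ n : ∑_{i=0}^d λ_i χ_A(m-i) ≠ 0}. -/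
noncomputable def Bf (A : Set ℕ) (lam : ℕ → ℤ) (d : ℕ) (n : ℕ) : ℕ :=
  Nat.card {m : ℕ | m ≤ n ∧ ∑ i ∈ Finset.range (d+1), lam i * chi A ((m : ℤ) - i) ≠ 0}

noncomputable def aF (A : Set ℕ) (n : ℕ) : Finset ℕ := (Finset.range (n+1)).filter (· ∈ A)

noncomputable def rFf (A : Set ℕ) (m : ℕ) : Finset (ℕ × ℕ) :=
  ((Finset.range (m+1)) ×ˢ (Finset.range (m+1))).filter
    (fun p => p.1 ∈ A ∧ p.2 ∈ A ∧ p.1 + p.2 = m)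

lemma Rf_eq_card (A : Set ℕ) (m : ℕ) : Rf A m = (rFf A m).card := by
  have h : {p : ℕ × ℕ | p.1 ∈ A ∧ p.2 ∈ A ∧ p.1 + p.2 = m} = ↑(rFf A m) := by
    ext p
    simp only [rFf, Finset.coe_filter, Finset.mem_product, Finset.mem_range,
      Nat.lt_succ_iff, Set.mem_setOf_eq]
    constructor
    · rintro ⟨h1, h2, h3⟩
      exact ⟨⟨by omega, by omega⟩, h1, h2, h3⟩
    · rintro ⟨_, h⟩; exact h
  rw [Rf, h, Nat.card_coe_set_eq, Set.ncard_coe_finset]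

lemma Rf_le (A : Set ℕ) (m : ℕ) : Rf A m ≤ (aF A m).card := by
  rw [Rf_eq_card]
  apply Finset.card_le_card_of_injOn (fun p => p.1)
  · intro p hp
    simp only [rFf, Finset.mem_coe, Finset.mem_filter, Finset.mem_product, Finset.mem_range] at hp
    simp only [aF, Finset.mem_coe, Finset.mem_filter, Finset.mem_range]
    exact ⟨hp.1.1, hp.2.1⟩
  · intro p hp q hq hpq
    simp only [rFf, Finset.mem_coe, Finset.mem_filter] at hp hq
    have h1 : p.1 = q.1 := hpq
    have h2 : p.2 = q.2 := by
      have e1 := hp.2.2.2; have e2 := hq.2.2.2; omega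
    exact Prod.ext h1 h2

noncomputable def pF (A : Set ℕ) (N : ℕ) : Finset (ℕ × ℕ) :=
  ((Finset.range (N+1)) ×ˢ (Finset.range (N+1))).filter
    (fun p => p.1 ∈ A ∧ p.2 ∈ A ∧ p.1 + p.2 ≤ N)

noncomputable def TT (A : Set ℕ) (N : ℕ) : ℕ := ∑ m ∈ Finset.range (N+1), Rf A m

lemma TT_eq (A : Set ℕ) (N : ℕ) : TT A N = (pF A N).card := by
  have h : pF A N = (Finset.range (N+1)).biUnion (fun m => rFf A m) := by
    ext p
    simp only [pF, rFf, Finset.mem_biUnion, Finset.mem_filter, Finset.mem_product,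
      Finset.mem_range, Nat.lt_succ_iff]
    constructor
    · rintro ⟨⟨h1, h2⟩, ha, hb, hle⟩
      exact ⟨p.1 + p.2, hle, ⟨by omega, by omega⟩, ha, hb, rfl⟩
    · rintro ⟨m, hm, ⟨h1, h2⟩, ha, hb, he⟩
      exact ⟨⟨by omega, by omega⟩, ha, hb, by omega⟩
  rw [h, Finset.card_biUnion]
  · simp only [TT, Rf_eq_card]
  · intro x hx y hy hxy
    apply Finset.disjoint_left.mpr
    intro p hp hq
    simp only [rFf, Finset.mem_filter] at hp hq
    exact hxy (by omega)

lemma sq_le_TT (A : Set ℕ) (n : ℕ) : (aF A n).card ^ 2 ≤ TT A (2*n) := by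
  rw [TT_eq]
  calc (aF A n).card ^ 2 = ((aF A n) ×ˢ (aF A n)).card := by
        rw [Finset.card_product]; ring
    _ ≤ (pF A (2*n)).card := by
        apply Finset.card_le_card
        intro p hp
        simp only [Finset.mem_product, aF, Finset.mem_filter, Finset.mem_range,
          Nat.lt_succ_iff] at hp
        simp only [pF, Finset.mem_filter, Finset.mem_product, Finset.mem_range,
          Nat.lt_succ_iff]
        exact ⟨⟨by omega, by omega⟩, hp.1.2, hp.2.2, by omega⟩

lemma aF_mono (A : Set ℕ) {m n : ℕ} (h : m ≤ n) : (aF A m).card ≤ (aF A n).card := by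
  apply Finset.card_le_card
  intro a ha
  simp only [aF, Finset.mem_filter, Finset.mem_range] at ha ⊢
  exact ⟨by omega, ha.2⟩

lemma TT_diff (A : Set ℕ) (N i : ℕ) (hi : i ≤ N) :
    TT A N ≤ TT A (N - i) + i * (aF A N).card := by
  have : TT A N = TT A (N - i) + ∑ m ∈ Finset.Ico (N - i + 1) (N + 1), Rf A m := by
    rw [TT, TT, ← Finset.sum_range_add_sum_Ico _ (by omega : N - i + 1 ≤ N + 1)]
  rw [this]
  have h2 : ∑ m ∈ Finset.Ico (N - i + 1) (N + 1), Rf A m ≤ i * (aF A N).card := by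
    calc ∑ m ∈ Finset.Ico (N - i + 1) (N + 1), Rf A m
        ≤ ∑ m ∈ Finset.Ico (N - i + 1) (N + 1), (aF A N).card := by
          apply Finset.sum_le_sum
          intro m hm
          simp only [Finset.mem_Ico] at hm
          exact le_trans (Rf_le A m) (aF_mono A (by omega))
      _ = i * (aF A N).card := by
          rw [Finset.sum_const, Nat.card_Ico]
          congr 1; omega
  omega

lemma Bf_le (A : Set ℕ) (lam : ℕ → ℤ) (d n : ℕ) :
    Bf A lam d n ≤ (d + 1) * (aF A n).card := by
  set bF : Finset ℕ := (Finset.range (n+1)).filter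
    (fun m => ∑ i ∈ Finset.range (d+1), lam i * chi A ((m : ℤ) - i) ≠ 0) with hbF
  have h : {m : ℕ | m ≤ n ∧ ∑ i ∈ Finset.range (d+1), lam i * chi A ((m : ℤ) - i) ≠ 0}
      = ↑bF := by
    ext m
    simp only [hbF, Finset.coe_filter, Finset.mem_range, Nat.lt_succ_iff, Set.mem_setOf_eq]
  have hB : Bf A lam d n = bF.card := by
    rw [Bf, h, Nat.card_coe_set_eq, Set.ncard_coe_finset]
  rw [hB]
  have hsub : bF ⊆ (aF A n).biUnion (fun a => Finset.Icc a (a + d)) := by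
    intro m hm
    simp only [hbF, Finset.mem_filter, Finset.mem_range, Nat.lt_succ_iff] at hm
    obtain ⟨hmn, hne⟩ := hm
    have : ∃ i ∈ Finset.range (d+1), lam i * chi A ((m : ℤ) - i) ≠ 0 := by
      by_contra hc
      push_neg at hc
      exact hne (Finset.sum_eq_zero hc)
    obtain ⟨i, hi, hne2⟩ := this
    simp only [Finset.mem_range, Nat.lt_succ_iff] at hi
    have hchi : chi A ((m : ℤ) - i) ≠ 0 := fun h => hne2 (by rw [h, mul_zero])
    rw [chi] at hchi
    split_ifs at hchi with hcond
    · obtain ⟨hge, hmem⟩ := hcond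
      have him : i ≤ m := by omega
      have htn : ((m : ℤ) - i).toNat = m - i := by omega
      rw [htn] at hmem
      simp only [Finset.mem_biUnion]
      refine ⟨m - i, ?_, ?_⟩
      · simp only [aF, Finset.mem_filter, Finset.mem_range, Nat.lt_succ_iff]
        exact ⟨by omega, hmem⟩
      · simp only [Finset.mem_Icc]; omega
    · exact absurd rfl hchi
  calc bF.card ≤ ((aF A n).biUnion (fun a => Finset.Icc a (a + d))).card :=
        Finset.card_le_card hsub
    _ ≤ ∑ a ∈ aF A n, (Finset.Icc a (a + d)).card := Finset.card_biUnion_le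
    _ = (d + 1) * (aF A n).card := by
        simp only [Nat.card_Icc]
        rw [Finset.sum_congr rfl (fun a _ => by omega : ∀ a ∈ aF A n, a + d + 1 - a = d + 1)]
        rw [Finset.sum_const, smul_eq_mul, mul_comm]

lemma Rz_sum (A : Set ℕ) (i N : ℕ) (hi : i ≤ N) :
    ∑ m ∈ Finset.range (N+1), (Rz A ((m:ℤ) - i) : ℤ) = (TT A (N - i) : ℤ) := by
  rw [Finset.range_eq_Ico, ← Finset.sum_Ico_consecutive _ (Nat.zero_le i) (by omega : i ≤ N + 1)]
  have h1 : ∑ m ∈ Finset.Ico 0 i, (Rz A ((m:ℤ) - i) : ℤ) = 0 := by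
    apply Finset.sum_eq_zero
    intro m hm
    simp only [Finset.mem_Ico] at hm
    rw [Rz, if_neg (by omega)]
    rfl
  rw [h1, zero_add, Finset.sum_Ico_eq_sum_range]
  have h2 : ∀ j ∈ Finset.range (N + 1 - i), (Rz A (((i + j : ℕ) :ℤ) - i) : ℤ) = (Rf A j : ℤ) := by
    intro j hj
    have ht : (((i + j : ℕ) : ℤ) - i).toNat = j := by push_cast; omega
    rw [Rz, if_pos (by push_cast; omega), ht]
  rw [Finset.sum_congr rfl h2, TT]
  push_cast
  rw [show N + 1 - i = N - i + 1 by omega]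

noncomputable def gZ (A : Set ℕ) (lam : ℕ → ℤ) (d : ℕ) (m : ℕ) : ℤ :=
  ∑ i ∈ Finset.range (d+1), lam i * (Rz A ((m:ℤ) - i) : ℤ)

lemma gZ_sum (A : Set ℕ) (lam : ℕ → ℤ) (d N : ℕ) (hd : d ≤ N) :
    ∑ m ∈ Finset.range (N+1), gZ A lam d m
      = ∑ i ∈ Finset.range (d+1), lam i * (TT A (N - i) : ℤ) := by
  simp only [gZ]
  rw [Finset.sum_comm]
  apply Finset.sum_congr rfl
  intro i hi
  simp only [Finset.mem_range, Nat.lt_succ_iff] at hi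
  rw [← Finset.mul_sum, Rz_sum A i N (by omega)]

lemma TT_mono (A : Set ℕ) {m n : ℕ} (h : m ≤ n) : TT A m ≤ TT A n := by
  apply Finset.sum_le_sum_of_subset
  apply Finset.range_subset_range.mpr
  omega

lemma comb (A : Set ℕ) (lam : ℕ → ℤ) (d n : ℕ) (hd : d ≤ 2*n)
    (hs : 0 < ∑ i ∈ Finset.range (d+1), lam i) :
    (∑ i ∈ Finset.range (d+1), lam i) * ((aF A n).card : ℤ)^2
      - (∑ i ∈ Finset.range (d+1), |lam i|) * d * ((aF A (2*n)).card : ℤ)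
    ≤ ∑ m ∈ Finset.range (2*n+1), gZ A lam d m := by
  rw [gZ_sum A lam d (2*n) hd]
  set N := 2*n with hN
  have key : ∀ i ∈ Finset.range (d+1),
      lam i * (TT A N : ℤ) - |lam i| * (d * ((aF A N).card : ℤ))
        ≤ lam i * (TT A (N - i) : ℤ) := by
    intro i hi
    simp only [Finset.mem_range, Nat.lt_succ_iff] at hi
    have h2 : (TT A N : ℤ) ≤ (TT A (N - i) : ℤ) + i * ((aF A N).card : ℤ) := by
      exact_mod_cast TT_diff A N i (by omega)
    have h3 : (TT A (N - i) : ℤ) ≤ (TT A N : ℤ) := by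
      exact_mod_cast TT_mono A (by omega : N - i ≤ N)
    have hc : (0 : ℤ) ≤ ((aF A N).card : ℤ) := Int.natCast_nonneg _
    have hid : (i : ℤ) ≤ (d : ℤ) := by exact_mod_cast hi
    rcases le_or_gt 0 (lam i) with h | h
    · have habs : |lam i| = lam i := abs_of_nonneg h
      rw [habs]
      nlinarith [mul_le_mul_of_nonneg_left h2 h,
        mul_le_mul_of_nonneg_left (mul_le_mul_of_nonneg_right hid hc) h]
    · have habs : |lam i| = -lam i := abs_of_neg h
      rw [habs]
      have hh := mul_le_mul_of_nonpos_left h3 h.le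
      have hpos : (0:ℤ) ≤ -lam i * ((d:ℤ) * ((aF A N).card : ℤ)) :=
        mul_nonneg (neg_nonneg.mpr h.le) (mul_nonneg (Int.natCast_nonneg _) hc)
      linarith
  calc (∑ i ∈ Finset.range (d+1), lam i) * ((aF A n).card : ℤ)^2
        - (∑ i ∈ Finset.range (d+1), |lam i|) * d * ((aF A N).card : ℤ)
      ≤ (∑ i ∈ Finset.range (d+1), lam i) * (TT A N : ℤ)
        - (∑ i ∈ Finset.range (d+1), |lam i|) * d * ((aF A N).card : ℤ) := by
        have hT : ((aF A n).card : ℤ)^2 ≤ (TT A N : ℤ) := by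
          exact_mod_cast sq_le_TT A n
        nlinarith
    _ = ∑ i ∈ Finset.range (d+1),
          (lam i * (TT A N : ℤ) - |lam i| * (d * ((aF A N).card : ℤ))) := by
        rw [Finset.sum_sub_distrib, ← Finset.sum_mul, ← Finset.sum_mul]
        ring
    _ ≤ ∑ i ∈ Finset.range (d+1), lam i * (TT A (N - i) : ℤ) :=
        Finset.sum_le_sum key

lemma a_le_t_add (a t : ℝ) (ha : 0 ≤ a) (ht : 0 < t) : a ≤ t + a^2/t := by
  rcases le_or_gt a t with h | h
  · have : 0 ≤ a^2/t := div_nonneg (sq_nonneg a) ht.le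
    linarith
  · have h2 : a ≤ a^2/t := by
      rw [le_div_iff₀ ht]
      nlinarith
    linarith [ht.le]

lemma aN_le (A : Set ℕ) (n : ℕ) : (aF A n).card ≤ n + 1 := by
  calc (aF A n).card ≤ (Finset.range (n+1)).card := Finset.card_le_card (Finset.filter_subset _ _)
    _ = n + 1 := Finset.card_range _

set_option maxHeartbeats 1000000 in
lemma main_freq (A : Set ℕ) (lam : ℕ → ℤ) (d : ℕ)
    (hs : 0 < ∑ i ∈ Finset.range (d+1), lam i)
    (C : ℝ) (M : ℕ) (hbd : ∀ m : ℕ, M ≤ m → |((gZ A lam d m : ℤ) : ℝ)| ≤ C)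
    (c' c : ℝ) (hcc : c' < c)
    (hfreq : ∃ᶠ n in atTop, c < ((∑ i ∈ Finset.range (d+1), lam i : ℤ) : ℝ) / (2*(d+1)^2)
        * ((Bf A lam d n : ℝ) / Real.sqrt n)^2) :
    ∃ᶠ m in atTop, c' ≤ |((gZ A lam d m : ℤ) : ℝ)| := by
  rcases lt_or_ge c' 0 with hc' | hc'
  · exact Filter.Frequently.of_forall (fun m => le_trans hc'.le (abs_nonneg _))
  -- notation
  set g : ℕ → ℝ := fun m => ((gZ A lam d m : ℤ) : ℝ) with hg
  set a : ℕ → ℝ := fun n => ((aF A n).card : ℝ) with ha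
  set sR : ℝ := ((∑ i ∈ Finset.range (d+1), lam i : ℤ) : ℝ) with hsR
  have hsR0 : 0 < sR := by rw [hsR]; exact_mod_cast hs
  set LdR : ℝ := ((∑ i ∈ Finset.range (d+1), |lam i| : ℤ) : ℝ) * d with hLdR
  have hLdR0 : 0 ≤ LdR := by
    rw [hLdR]
    apply mul_nonneg _ (Nat.cast_nonneg d)
    exact_mod_cast Finset.sum_nonneg (fun i _ => abs_nonneg (lam i))
  have ha0 : ∀ n, 0 ≤ a n := fun n => Nat.cast_nonneg _
  have hc0 : 0 < c := lt_of_le_of_lt hc' hcc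
  -- step: frequent n with 2*c*n < sR * a n ^ 2
  have hfreq2 : ∃ᶠ n : ℕ in atTop, 2 * c * n < sR * a n ^ 2 := by
    apply ((hfreq.and_eventually (Filter.eventually_ge_atTop 1)).mono)
    rintro n ⟨hn, hn1⟩
    have hnR : (0:ℝ) < n := by exact_mod_cast hn1
    have hsq : (Real.sqrt n)^2 = (n:ℝ) := Real.sq_sqrt (le_of_lt hnR)
    have hBle : (Bf A lam d n : ℝ) ≤ (d+1) * a n := by
      have := Bf_le A lam d n
      have h2 : (Bf A lam d n : ℝ) ≤ ((d+1) * (aF A n).card : ℕ) := by exact_mod_cast this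
      rw [Nat.cast_mul] at h2
      push_cast at h2 ⊢
      exact h2
    have hBnn : (0:ℝ) ≤ (Bf A lam d n : ℝ) := Nat.cast_nonneg _
    have hv : sR / (2*(d+1)^2) * ((Bf A lam d n : ℝ) / Real.sqrt n)^2
        ≤ sR * a n ^ 2 / (2 * n) := by
      rw [div_pow, hsq]
      have hB2 : ((Bf A lam d n : ℝ))^2 ≤ ((d:ℝ)+1)^2 * a n ^ 2 := by
        nlinarith [hBle, hBnn, ha0 n]
      calc sR / (2*(d+1)^2) * ((Bf A lam d n : ℝ)^2 / n)
          ≤ sR / (2*(d+1)^2) * ((((d:ℝ)+1)^2 * a n ^ 2) / n) := by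
            apply mul_le_mul_of_nonneg_left _ (by positivity)
            exact (div_le_div_iff_of_pos_right hnR).mpr hB2
        _ = sR * a n ^ 2 / (2 * n) := by
            field_simp
    have h3 : c < sR * a n ^ 2 / (2 * n) := lt_of_lt_of_le hn hv
    rw [lt_div_iff₀ (by positivity)] at h3
    linarith
  -- K bound
  set D0 : ℝ := ∑ m ∈ Finset.range M, |g m| with hD0
  have hD00 : 0 ≤ D0 := Finset.sum_nonneg (fun m _ => abs_nonneg _)
  set C' : ℝ := max C 0 with hC'
  have hC'0 : 0 ≤ C' := le_max_right _ _
  have hbd' : ∀ m : ℕ, M ≤ m → |g m| ≤ C' := fun m hm => le_trans (hbd m hm) (le_max_left _ _)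
  have hSumAbs : ∀ n : ℕ, ∑ m ∈ Finset.range (2*n+1), g m ≤ D0 + (2*(n:ℝ)+1) * C' := by
    intro n
    have h1 : ∑ m ∈ Finset.range (2*n+1), g m ≤ ∑ m ∈ Finset.range (2*n+1), |g m| :=
      Finset.sum_le_sum (fun m _ => le_abs_self _)
    have h2 : ∑ m ∈ Finset.range (2*n+1), |g m|
        = ∑ m ∈ (Finset.range (2*n+1)).filter (fun m => m < M), |g m|
          + ∑ m ∈ (Finset.range (2*n+1)).filter (fun m => ¬ m < M), |g m| :=
      (Finset.sum_filter_add_sum_filter_not _ _ _).symm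
    have h3 : ∑ m ∈ (Finset.range (2*n+1)).filter (fun m => m < M), |g m| ≤ D0 := by
      apply Finset.sum_le_sum_of_subset_of_nonneg
      · intro m hm
        simp only [Finset.mem_filter, Finset.mem_range] at hm
        exact Finset.mem_range.mpr hm.2
      · intro m _ _; exact abs_nonneg _
    have h4 : ∑ m ∈ (Finset.range (2*n+1)).filter (fun m => ¬ m < M), |g m|
        ≤ (2*(n:ℝ)+1) * C' := by
      calc ∑ m ∈ (Finset.range (2*n+1)).filter (fun m => ¬ m < M), |g m|
          ≤ ((Finset.range (2*n+1)).filter (fun m => ¬ m < M)).card • C' := by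
            apply Finset.sum_le_card_nsmul
            intro m hm
            simp only [Finset.mem_filter] at hm
            exact hbd' m (by omega)
        _ ≤ (2*(n:ℝ)+1) * C' := by
            rw [nsmul_eq_mul]
            apply mul_le_mul_of_nonneg_right _ hC'0
            have : ((Finset.range (2*n+1)).filter (fun m => ¬ m < M)).card ≤ 2*n+1 := by
              calc _ ≤ (Finset.range (2*n+1)).card := Finset.card_le_card (Finset.filter_subset _ _)
                _ = 2*n+1 := Finset.card_range _
            exact_mod_cast this
    linarith
  have hcomb : ∀ n : ℕ, d ≤ 2*n →
      sR * a n ^ 2 - LdR * a (2*n) ≤ ∑ m ∈ Finset.range (2*n+1), g m := by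
    intro n hd
    have := comb A lam d n hd hs
    have h2 : ((∑ i ∈ Finset.range (d+1), lam i) * ((aF A n).card : ℤ)^2
        - (∑ i ∈ Finset.range (d+1), |lam i|) * d * ((aF A (2*n)).card : ℤ) : ℝ)
        ≤ ((∑ m ∈ Finset.range (2*n+1), gZ A lam d m : ℤ) : ℝ) := by exact_mod_cast this
    push_cast at h2
    simp only [hg, ha, hsR, hLdR]
    push_cast
    linarith
  set K : ℝ := (D0 + 2*C' + 2*LdR) / sR with hK
  have hK0 : 0 ≤ K := by
    apply div_nonneg _ hsR0.le
    linarith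
  have hKbd : ∀ n : ℕ, d ≤ 2*n → a n ^ 2 ≤ K * ((n:ℝ) + 1) := by
    intro n hd
    have h1 := hcomb n hd
    have h2 := hSumAbs n
    have h3 : a (2*n) ≤ 2*(n:ℝ)+1 := by
      have := aN_le A (2*n)
      simp only [ha]
      exact_mod_cast this
    have h4 : sR * a n ^ 2 ≤ D0 + (2*(n:ℝ)+1)*C' + LdR * (2*(n:ℝ)+1) := by
      nlinarith [hLdR0]
    rw [hK, div_mul_eq_mul_div, le_div_iff₀ hsR0]
    nlinarith [hC'0, hLdR0]
  -- final frequently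
  rw [Filter.frequently_atTop]
  intro N0
  set D1 : ℝ := ∑ m ∈ Finset.range N0, |g m| with hD1
  have hD10 : 0 ≤ D1 := Finset.sum_nonneg (fun m _ => abs_nonneg _)
  set θ : ℝ := (c - c') / (2 * (LdR + 1)) with hθ
  have hθ0 : 0 < θ := by
    apply div_pos (by linarith) (by linarith)
  set C3 : ℝ := LdR * (3 * K / θ) with hC3
  have hC30 : 0 ≤ C3 := by
    apply mul_nonneg hLdR0
    positivity
  obtain ⟨n1, hn1⟩ := exists_nat_gt ((C3 + D1 + c' + 1) / (c - c'))
  obtain ⟨n, hnge, hn⟩ := Filter.frequently_atTop.mp hfreq2 (max (max N0 d) (max n1 1))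
  have hnN0 : N0 ≤ n := le_trans (le_trans (le_max_left _ _) (le_max_left _ _)) hnge
  have hnd : d ≤ n := le_trans (le_trans (le_max_right _ _) (le_max_left _ _)) hnge
  have hnn1 : n1 ≤ n := le_trans (le_trans (le_max_left _ _) (le_max_right _ _)) hnge
  have hn1' : 1 ≤ n := le_trans (le_trans (le_max_right _ _) (le_max_right _ _)) hnge
  have hnR : (1:ℝ) ≤ n := by exact_mod_cast hn1'
  by_contra hno
  push_neg at hno
  have hno' : ∀ m : ℕ, N0 ≤ m → |g m| < c' := fun m hm => hno m hm
  -- upper bound on sum using hno'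
  have hup : ∑ m ∈ Finset.range (2*n+1), g m ≤ D1 + (2*(n:ℝ)+1) * c' := by
    have h2 : ∑ m ∈ Finset.range (2*n+1), g m
        = ∑ m ∈ (Finset.range (2*n+1)).filter (fun m => m < N0), g m
          + ∑ m ∈ (Finset.range (2*n+1)).filter (fun m => ¬ m < N0), g m :=
      (Finset.sum_filter_add_sum_filter_not _ _ _).symm
    have h3 : ∑ m ∈ (Finset.range (2*n+1)).filter (fun m => m < N0), g m ≤ D1 := by
      calc ∑ m ∈ (Finset.range (2*n+1)).filter (fun m => m < N0), g m
          ≤ ∑ m ∈ (Finset.range (2*n+1)).filter (fun m => m < N0), |g m| :=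
            Finset.sum_le_sum (fun m _ => le_abs_self _)
        _ ≤ D1 := by
            apply Finset.sum_le_sum_of_subset_of_nonneg
            · intro m hm
              simp only [Finset.mem_filter, Finset.mem_range] at hm
              exact Finset.mem_range.mpr hm.2
            · intro m _ _; exact abs_nonneg _
    have h4 : ∑ m ∈ (Finset.range (2*n+1)).filter (fun m => ¬ m < N0), g m
        ≤ (2*(n:ℝ)+1) * c' := by
      calc ∑ m ∈ (Finset.range (2*n+1)).filter (fun m => ¬ m < N0), g m
          ≤ ((Finset.range (2*n+1)).filter (fun m => ¬ m < N0)).card • c' := by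
            apply Finset.sum_le_card_nsmul
            intro m hm
            simp only [Finset.mem_filter] at hm
            exact le_trans (le_abs_self _) (hno' m (by omega)).le
        _ ≤ (2*(n:ℝ)+1) * c' := by
            rw [nsmul_eq_mul]
            apply mul_le_mul_of_nonneg_right _ hc'
            have : ((Finset.range (2*n+1)).filter (fun m => ¬ m < N0)).card ≤ 2*n+1 := by
              calc _ ≤ (Finset.range (2*n+1)).card := Finset.card_le_card (Finset.filter_subset _ _)
                _ = 2*n+1 := Finset.card_range _
            exact_mod_cast this
    linarith
  -- lower bound comb
  have hlow := hcomb n (by omega)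
  -- error bound
  have herr : LdR * a (2*n) ≤ (c - c')/2 * n + C3 := by
    have ht : 0 < θ * n := by positivity
    have h1 : a (2*n) ≤ θ * n + (a (2*n))^2 / (θ * n) := a_le_t_add _ _ (ha0 _) ht
    have h2 : (a (2*n))^2 ≤ K * (2*(n:ℝ)+1) := by
      have := hKbd (2*n) (by omega)
      push_cast at this ⊢
      linarith
    have h3 : (a (2*n))^2 / (θ * n) ≤ 3*K/θ := by
      rw [div_le_div_iff₀ ht hθ0]
      have : K * (2*(n:ℝ)+1) * θ ≤ 3*K*n*θ := by
        nlinarith [mul_nonneg hK0 hθ0.le, hnR]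
      nlinarith [hθ0.le]
    have h4 : a (2*n) ≤ θ * n + 3*K/θ := by linarith
    have h5 : LdR * a (2*n) ≤ LdR * θ * n + LdR * (3*K/θ) := by
      nlinarith [hLdR0, ha0 (2*n)]
    have h6 : LdR * θ ≤ (c - c')/2 := by
      have h2' : θ * (2 * (LdR + 1)) = c - c' := by
        rw [hθ]; field_simp
      linarith [hθ0.le]
    have h7 : LdR * θ * n ≤ (c-c')/2 * n := by
      apply mul_le_mul_of_nonneg_right h6 (by linarith)
    linarith
  -- arithmetic contradiction
  have h5 : (C3 + D1 + c' + 1) < (c - c') * n := by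
    have hr : (C3 + D1 + c' + 1) / (c - c') < (n1 : ℝ) := hn1
    have hn1n : (n1:ℝ) ≤ (n:ℝ) := by exact_mod_cast hnn1
    rw [div_lt_iff₀ (by linarith)] at hr
    nlinarith [hr, hn1n, sub_pos.mpr hcc]
  linarith [hn, hlow, hup, herr, h5]

lemma limsup_coe_le (u v : ℕ → ℝ)
    (h : ∀ c' c : ℝ, c' < c → (∃ᶠ n in atTop, c < v n) → ∃ᶠ m in atTop, c' ≤ u m) :
    limsup (fun n => ((v n : ℝ) : EReal)) atTop ≤ limsup (fun n => ((u n : ℝ) : EReal)) atTop := by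
  apply le_of_forall_lt
  intro x hx
  obtain ⟨cq, hx1, hx2⟩ := EReal.exists_between_coe_real hx
  obtain ⟨cq', hx1', hx2'⟩ := EReal.exists_between_coe_real hx1
  have hfreq : ∃ᶠ n in atTop, cq < v n := by
    have h2 := Filter.frequently_lt_of_lt_limsup (u := fun n => ((v n : ℝ) : EReal))
      (by isBoundedDefault) hx2
    exact h2.mono (fun n hn => by exact_mod_cast hn)
  have h3 := h cq' cq (by exact_mod_cast hx2') hfreq
  have hle : (cq' : EReal) ≤ limsup (fun n => ((u n : ℝ) : EReal)) atTop :=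
    Filter.le_limsup_of_frequently_le (h3.mono (fun m hm => by exact_mod_cast hm))
  exact lt_of_lt_of_le hx1' hle

lemma stmt5_pos (d : ℕ) (lam : ℕ → ℤ)
    (hs : 0 < ∑ i ∈ Finset.range (d+1), lam i) (A : Set ℕ) :
    limsup (fun n : ℕ =>
        ((|∑ i ∈ Finset.range (d + 1), (lam i : ℝ) * Rz A ((n : ℤ) - i)| : ℝ) : EReal)) atTop
      ≥ limsup (fun n : ℕ =>
        ((|((∑ i ∈ Finset.range (d + 1), lam i : ℤ) : ℝ)| / (2 * (d + 1) ^ 2) *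
          ((Bf A lam d n : ℝ) / Real.sqrt n) ^ 2 : ℝ) : EReal)) atTop := by
  have hLg : ∀ n : ℕ, |∑ i ∈ Finset.range (d + 1), (lam i : ℝ) * Rz A ((n : ℤ) - i)|
      = |((gZ A lam d n : ℤ) : ℝ)| := by
    intro n
    congr 1
    rw [gZ]
    push_cast
    rfl
  rw [ge_iff_le]
  simp only [hLg]
  rcases eq_or_ne (limsup (fun n : ℕ => ((|((gZ A lam d n : ℤ) : ℝ)| : ℝ) : EReal)) atTop) ⊤
    with htop | htop
  · rw [htop]; exact le_top
  · have hlt := Ne.lt_top htop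
    obtain ⟨C, hC1, _⟩ := EReal.exists_between_coe_real hlt
    have hev : ∀ᶠ m in atTop, ((|((gZ A lam d m : ℤ) : ℝ)| : ℝ) : EReal) < (C : EReal) :=
      Filter.eventually_lt_of_limsup_lt hC1
    obtain ⟨M, hM⟩ := Filter.eventually_atTop.mp hev
    have hbd : ∀ m : ℕ, M ≤ m → |((gZ A lam d m : ℤ) : ℝ)| ≤ C := by
      intro m hm
      have := hM m hm
      exact le_of_lt (by exact_mod_cast this)
    apply limsup_coe_le
    intro c' c hcc hfreq
    apply main_freq A lam d hs C M hbd c' c hcc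
    have habs : |((∑ i ∈ Finset.range (d+1), lam i : ℤ) : ℝ)|
        = ((∑ i ∈ Finset.range (d+1), lam i : ℤ) : ℝ) := abs_of_pos (by exact_mod_cast hs)
    simpa only [habs] using hfreq

theorem stmt5 (d : ℕ) (lam : ℕ → ℤ)
    (hlam : ∃ i ≤ d, lam i ≠ 0)
    (A : Set ℕ) (hA : A.Infinite) :
    limsup (fun n : ℕ =>
        ((|∑ i ∈ Finset.range (d + 1), (lam i : ℝ) * Rz A ((n : ℤ) - i)| : ℝ) : EReal)) atTop
      ≥ limsup (fun n : ℕ =>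
        ((|((∑ i ∈ Finset.range (d + 1), lam i : ℤ) : ℝ)| / (2 * (d + 1) ^ 2) *
          ((Bf A lam d n : ℝ) / Real.sqrt n) ^ 2 : ℝ) : EReal)) atTop := by
  rcases lt_trichotomy (∑ i ∈ Finset.range (d+1), lam i) 0 with hneg | hzero | hpos
  · -- apply stmt5_pos to -lam
    have hs' : 0 < ∑ i ∈ Finset.range (d+1), (fun i => -lam i) i := by
      simp only [Finset.sum_neg_distrib]
      omega
    have key := stmt5_pos d (fun i => -lam i) hs' A
    have h1 : (fun n : ℕ =>
        ((|∑ i ∈ Finset.range (d + 1), (((fun i => -lam i) i : ℤ) : ℝ) * Rz A ((n : ℤ) - i)| : ℝ) : EReal))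
        = (fun n : ℕ =>
        ((|∑ i ∈ Finset.range (d + 1), (lam i : ℝ) * Rz A ((n : ℤ) - i)| : ℝ) : EReal)) := by
      funext n
      congr 1
      have he : ∑ i ∈ Finset.range (d + 1), (((-lam i : ℤ)) : ℝ) * Rz A ((n : ℤ) - i)
          = -(∑ i ∈ Finset.range (d + 1), (lam i : ℝ) * Rz A ((n : ℤ) - i)) := by
        rw [← Finset.sum_neg_distrib]
        apply Finset.sum_congr rfl
        intro i _
        push_cast
        ring
      rw [he, abs_neg]
    have hBf : ∀ n : ℕ, Bf A (fun i => -lam i) d n = Bf A lam d n := by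
      intro n
      have he : ∀ m : ℕ, ∑ i ∈ Finset.range (d+1), (-lam i) * chi A ((m : ℤ) - i)
          = -(∑ i ∈ Finset.range (d+1), lam i * chi A ((m : ℤ) - i)) := by
        intro m
        rw [← Finset.sum_neg_distrib]
        exact Finset.sum_congr rfl (fun i _ => by ring)
      have hset : {m : ℕ | m ≤ n ∧ ∑ i ∈ Finset.range (d+1), (-lam i) * chi A ((m : ℤ) - i) ≠ 0}
          = {m : ℕ | m ≤ n ∧ ∑ i ∈ Finset.range (d+1), lam i * chi A ((m : ℤ) - i) ≠ 0} := by
        ext m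
        simp only [Set.mem_setOf_eq, he, neg_ne_zero]
      rw [Bf, Bf, hset]
    have h2 : (fun n : ℕ =>
        ((|((∑ i ∈ Finset.range (d + 1), -lam i : ℤ) : ℝ)| / (2 * (d + 1) ^ 2) *
          ((Bf A (fun i => -lam i) d n : ℝ) / Real.sqrt n) ^ 2 : ℝ) : EReal))
        = (fun n : ℕ =>
        ((|((∑ i ∈ Finset.range (d + 1), lam i : ℤ) : ℝ)| / (2 * (d + 1) ^ 2) *
          ((Bf A lam d n : ℝ) / Real.sqrt n) ^ 2 : ℝ) : EReal)) := by
      funext n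
      congr 1
      rw [show ((∑ i ∈ Finset.range (d + 1), -lam i : ℤ) : ℝ)
          = -((∑ i ∈ Finset.range (d + 1), lam i : ℤ) : ℝ) by push_cast; exact Finset.sum_neg_distrib (f := fun i => (lam i : ℝ)),
        abs_neg, hBf n]
    rw [h1, h2] at key
    exact key
  · -- sum is zero
    rw [ge_iff_le]
    have hRHS : (fun n : ℕ =>
        ((|((∑ i ∈ Finset.range (d + 1), lam i : ℤ) : ℝ)| / (2 * (d + 1) ^ 2) *
          ((Bf A lam d n : ℝ) / Real.sqrt n) ^ 2 : ℝ) : EReal))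
        = fun _ : ℕ => ((0 : ℝ) : EReal) := by
      funext n
      rw [hzero]
      norm_num
    rw [hRHS, limsup_const]
    apply Filter.le_limsup_of_frequently_le
    · apply Filter.Frequently.of_forall
      intro n
      exact_mod_cast abs_nonneg _
    · exact ⟨⊤, Filter.eventually_map.mpr (Filter.Eventually.of_forall (fun n => le_top))⟩
  · exact stmt5_pos d lam hpos A
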